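/- Exponent of a rounded same-sign sum (Lemma SE-S4 exponent part): if x and y are nonzero precision-p binary floating-point numbers with the same sign and e_y < e_x, then s := RNE(x + y) is nonzero, has the same sign as x, and its exponent satisfies e_x ≤ e_s ≤ e_x + 1. -/
import Mathlib


/-- t is representable in precision-p binary floating-point arithmetic. -/
def FpRep (p : ℕ) (t : ℝ) : Prop :=
  ∃ (m g : ℤ), |m| < (2 : ℤ) ^ p ∧ t = (m : ℝ) * (2 : ℝ) ^ g

/-- x is a nonzero precision-p binary float with exponent e. -/
def FpVal (p : ℕ) (e : ℤ) (x : ℝ) : Prop :=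
  ∃ m : ℤ, (2 : ℤ) ^ (p - 1) ≤ |m| ∧ |m| < (2 : ℤ) ^ p ∧
    x = (m : ℝ) * (2 : ℝ) ^ (e - ((p : ℤ) - 1))

/-- R rounds to a nearest precision-p floating-point number. -/
def IsRNE (p : ℕ) (R : ℝ → ℝ) : Prop :=
  ∀ t : ℝ, FpRep p (R t) ∧ ∀ z : ℝ, FpRep p z → |t - R t| ≤ |t - z|

lemma fpval_bounds {p : ℕ} (hp : 1 ≤ p) {e : ℤ} {x : ℝ} (h : FpVal p e x) :
    (2:ℝ)^e ≤ |x| ∧ |x| < (2:ℝ)^(e+1) := by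
  obtain ⟨m, h1, h2, hxe⟩ := h
  have hgpos : (0:ℝ) < (2:ℝ)^(e - ((p:ℤ)-1)) := by positivity
  have habs : |x| = |(m:ℝ)| * (2:ℝ)^(e - ((p:ℤ)-1)) := by
    rw [hxe, abs_mul, abs_of_pos hgpos]
  have hcast : ((2:ℤ)^(p-1) : ℝ) = (2:ℝ)^((p:ℤ)-1) := by
    push_cast
    rw [← zpow_natCast (2:ℝ) (p-1)]
    congr 1
    omega
  have hcast2 : ((2:ℤ)^p : ℝ) = (2:ℝ)^(p:ℤ) := by
    push_cast
    rw [← zpow_natCast (2:ℝ) p]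
  have hm1 : (2:ℝ)^((p:ℤ)-1) ≤ |(m:ℝ)| := by
    rw [← hcast, ← Int.cast_abs]; exact_mod_cast h1
  have hm2 : |(m:ℝ)| < (2:ℝ)^(p:ℤ) := by
    rw [← hcast2, ← Int.cast_abs]; exact_mod_cast h2
  constructor
  · calc (2:ℝ)^e = (2:ℝ)^((p:ℤ)-1) * (2:ℝ)^(e - ((p:ℤ)-1)) := by
          rw [← zpow_add₀ (two_ne_zero)]; congr 1; ring
    _ ≤ |(m:ℝ)| * (2:ℝ)^(e - ((p:ℤ)-1)) :=
          mul_le_mul_of_nonneg_right hm1 hgpos.le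
    _ = |x| := habs.symm
  · calc |x| = |(m:ℝ)| * (2:ℝ)^(e - ((p:ℤ)-1)) := habs
    _ < (2:ℝ)^(p:ℤ) * (2:ℝ)^(e - ((p:ℤ)-1)) :=
          mul_lt_mul_of_pos_right hm2 hgpos
    _ = (2:ℝ)^(e+1) := by rw [← zpow_add₀ (two_ne_zero)]; congr 1; ring

/-- Lemma SE-S4 (exponent part): same sign, e_y < e_x ⟹ s = RNE(x+y) is
nonzero, has the same sign as x, and e_x ≤ e_s ≤ e_x + 1. -/
theorem same_sign_sum_exponent (p : ℕ) (hp : 1 ≤ p)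
    (R : ℝ → ℝ) (hR : IsRNE p R) (x y : ℝ) (ex ey : ℤ)
    (hx : FpVal p ex x) (hy : FpVal p ey y) (hsign : 0 < x * y)
    (hexp : ey < ex) :
    R (x + y) ≠ 0 ∧ 0 < x * R (x + y) ∧
      ∃ es : ℤ, (2 : ℝ) ^ es ≤ |R (x + y)| ∧ |R (x + y)| < (2 : ℝ) ^ (es + 1) ∧
        ex ≤ es ∧ es ≤ ex + 1 := by
  have hxb := fpval_bounds hp hx
  have hyb := fpval_bounds hp hy
  set t := x + y with ht
  obtain ⟨-, hmin⟩ := hR t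
  set s := R t with hs
  set E := (2:ℝ)^ex with hEdef
  have hE : (0:ℝ) < E := by positivity
  have h2E : (2:ℝ)^(ex+1) = 2*E := by
    rw [zpow_add_one₀ (two_ne_zero : (2:ℝ) ≠ 0)]; ring
  have h4E : (2:ℝ)^(ex+2) = 4*E := by
    rw [show ex + 2 = (ex+1)+1 by ring, zpow_add_one₀ (two_ne_zero : (2:ℝ) ≠ 0), h2E]
    ring
  have hAx : E ≤ |x| := hxb.1
  have hAx2 : |x| < 2*E := h2E ▸ hxb.2
  have hBy : (0:ℝ) < |y| := lt_of_lt_of_le (by positivity) hyb.1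
  have hBy2 : |y| < E := by
    refine lt_of_lt_of_le hyb.2 ?_
    exact zpow_le_zpow_right₀ (by norm_num) (by omega)
  have hxne : x ≠ 0 := by
    intro h; rw [h, abs_zero] at hAx; linarith
  -- sign constant
  set cz : ℤ := if 0 < x then 1 else -1 with hczdef
  set c : ℝ := (cz : ℝ) with hcdef
  have hc : (c = 1 ∧ cz = 1) ∨ (c = -1 ∧ cz = -1) := by
    by_cases h : 0 < x
    · left; constructor <;> simp [hcdef, hczdef, h]
    · right; constructor <;> simp [hcdef, hczdef, h]
  have habsc : |c| = 1 := by rcases hc with ⟨h, -⟩ | ⟨h, -⟩ <;> simp [h]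
  have hcc : c * c = 1 := by rcases hc with ⟨h, -⟩ | ⟨h, -⟩ <;> simp [h]
  have hczabs : |cz| = 1 := by rcases hc with ⟨-, h⟩ | ⟨-, h⟩ <;> simp [h]
  have hcx : c * x = |x| := by
    by_cases h : 0 < x
    · simp [hcdef, hczdef, h, abs_of_pos h]
    · have hx' : x < 0 := lt_of_le_of_ne (not_lt.mp h) hxne
      simp [hcdef, hczdef, h, abs_of_neg hx']
  have hcy : c * y = |y| := by
    by_cases h : 0 < x
    · have hy' : 0 < y := by nlinarith
      simp [hcdef, hczdef, h, abs_of_pos hy']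
    · have hx' : x < 0 := lt_of_le_of_ne (not_lt.mp h) hxne
      have hy' : y < 0 := by nlinarith
      simp [hcdef, hczdef, h, abs_of_neg hy']
  set T : ℝ := |x| + |y| with hTdef
  have hct : c * t = T := by rw [ht, mul_add, hcx, hcy]
  have hTE : E < T := by simp [hTdef]; linarith
  have hT3 : T < 3*E := by simp [hTdef]; linarith
  -- representable point 1 : c * E
  have hp1 : (1:ℤ) ≤ 2^p := by exact_mod_cast Nat.one_le_two_pow
  have hrep1 : FpRep p (c * E) := by
    refine ⟨cz * 2^(p-1), ex - ((p:ℤ)-1), ?_, ?_⟩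
    · rw [abs_mul, hczabs, one_mul, abs_of_nonneg (by positivity : (0:ℤ) ≤ 2^(p-1))]
      exact pow_lt_pow_right₀ (by norm_num) (by omega)
    · have key : ((2:ℝ)^(p-1:ℕ)) * (2:ℝ)^(ex - ((p:ℤ)-1)) = E := by
        rw [← zpow_natCast (2:ℝ) (p-1), ← zpow_add₀ (two_ne_zero : (2:ℝ) ≠ 0)]
        congr 1; omega
      push_cast
      rw [mul_assoc, key]
  -- representable point 2 : c * w
  set w : ℝ := (2:ℝ)^(ex+2) - (2:ℝ)^(ex+2-(p:ℤ)) with hwdef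
  have hrep2 : FpRep p (c * w) := by
    refine ⟨cz * (2^p - 1), ex + 2 - (p:ℤ), ?_, ?_⟩
    · rw [abs_mul, hczabs, one_mul, abs_of_nonneg (by linarith : (0:ℤ) ≤ 2^p - 1)]
      linarith
    · have key : ((2:ℝ)^(p:ℕ)) * (2:ℝ)^(ex + 2 - (p:ℤ)) = (2:ℝ)^(ex+2) := by
        rw [← zpow_natCast (2:ℝ) p, ← zpow_add₀ (two_ne_zero : (2:ℝ) ≠ 0)]
        congr 1; omega
      push_cast
      rw [hcdef, hwdef, ← key]
      ring
  have hupos : (0:ℝ) < (2:ℝ)^(ex+2-(p:ℤ)) := by positivity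
  have huE : (2:ℝ)^(ex+2-(p:ℤ)) ≤ 2*E := by
    rw [← h2E]
    exact zpow_le_zpow_right₀ (by norm_num) (by omega)
  have hw1 : 2*E ≤ w := by rw [hwdef, h4E]; linarith
  have hw2 : w < 4*E := by rw [hwdef, h4E]; linarith
  -- |t - c*z| = |c*t - z|
  have key3 : ∀ z : ℝ, |t - c*z| = |c*t - z| := by
    intro z
    have : c*t - z = c * (t - c*z) := by
      rw [mul_sub, ← mul_assoc, hcc, one_mul]
    rw [this, abs_mul, habsc, one_mul]
  have habs_ts : |c*t - c*s| = |t - s| := by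
    rw [← mul_sub, abs_mul, habsc, one_mul]
  -- lower bound : E ≤ c*s
  have H1 := hmin (c*E) hrep1
  rw [key3, hct] at H1
  have hTEabs : |T - E| = T - E := abs_of_nonneg (by linarith)
  rw [hTEabs] at H1
  have hlow : E ≤ c*s := by
    have h1 : T - c*s ≤ |T - c*s| := le_abs_self _
    have h2 : |T - c*s| = |t - s| := by rw [← hct, habs_ts]
    linarith [h2 ▸ h1, H1]
  -- upper bound : c*s < 4*E
  have H2 := hmin (c*w) hrep2
  rw [key3, hct] at H2
  have hhigh : c*s < 4*E := by
    have h1 : c*s - T ≤ |T - c*s| := by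
      rw [abs_sub_comm]; exact le_abs_self _
    have h2 : |T - c*s| = |t - s| := by rw [← hct, habs_ts]
    rcases le_total T w with h | h
    · have h3 : |T - w| = -(T - w) := abs_of_nonpos (by linarith)
      linarith
    · have h3 : |T - w| = T - w := abs_of_nonneg (by linarith)
      linarith
  have hsabs : |s| = c*s := by
    have h1 : |c*s| = |s| := by rw [abs_mul, habsc, one_mul]
    rw [← h1, abs_of_pos (by linarith)]
  have hsne : s ≠ 0 := by
    intro h
    have h0 : c * s = 0 := by rw [h]; ring
    linarith
  have hxs : 0 < x * s := by
    have : x * s = (c*x) * (c*s) := by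
      rw [mul_mul_mul_comm, hcc, one_mul]
    rw [this, hcx]
    exact mul_pos (by linarith) (by linarith)
  refine ⟨hsne, hxs, ?_⟩
  by_cases hcase : |s| < 2*E
  · exact ⟨ex, by rw [hsabs]; exact hlow, by rw [h2E]; exact hcase, le_refl _, by omega⟩
  · refine ⟨ex + 1, ?_, ?_, by omega, le_refl _⟩
    · rw [h2E]; linarith [not_lt.mp hcase]
    · rw [show ex + 1 + 1 = ex + 2 by ring, h4E, hsabs]; exact hhigh
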